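/- Let G be a monotone class of graphs, H a graph, t a nonnegative integer, and L an independent collection of separations of H each of order at most t. If G is closed under (≤ t)-sums and every torso of L belongs to G, then L is G-duplicable. -/

import Mathlib

def IsSeparation {V : Type} (G : SimpleGraph V) (p : Set V × Set V) : Prop :=
  p.1 ∪ p.2 = Set.univ ∧ ∀ a ∈ p.1 \ p.2, ∀ b ∈ p.2 \ p.1, ¬ G.Adj a b

def IsIndepCollection {V : Type} (G : SimpleGraph V) (C : Set (Set V × Set V)) : Prop :=
  (∀ p ∈ C, IsSeparation G p ∧ (p.1 \ p.2).Nonempty) ∧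
  ∀ p ∈ C, ∀ q ∈ C, p ≠ q → p.1 ⊆ q.2 ∧ q.1 ⊆ p.2

/-- A collection `L` of separations of `H` is essential if for every `(A,B) ∈ L`, every
vertex of `A ∩ B` has a neighbor in `A \ B` and `H[A \ B]` is connected. -/
def EssentialCollection {V : Type} (H : SimpleGraph V) (L : Set (Set V × Set V)) : Prop :=
  ∀ p ∈ L, (∀ v ∈ p.1 ∩ p.2, ∃ u ∈ p.1 \ p.2, H.Adj v u) ∧
    (H.induce (p.1 \ p.2)).Connected

def wedgeRel {V : Type} (H : SimpleGraph V) (Z : Set V) (k : ℕ) :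
    (↥Z ⊕ (↥(Zᶜ) × Fin k)) → (↥Z ⊕ (↥(Zᶜ) × Fin k)) → Prop
  | Sum.inl z, Sum.inl z' => H.Adj z z'
  | Sum.inl z, Sum.inr (v, _) => H.Adj z v
  | Sum.inr (v, _), Sum.inl z => H.Adj v z
  | Sum.inr (v, i), Sum.inr (w, j) => i = j ∧ H.Adj v w

/-- `H ∧_k Z`: `k` disjoint copies of `H` with the copies of each `z ∈ Z` identified. -/
def wedge {V : Type} (H : SimpleGraph V) (Z : Set V) (k : ℕ) :
    SimpleGraph (↥Z ⊕ (↥(Zᶜ) × Fin k)) :=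
  SimpleGraph.fromRel (wedgeRel H Z k)

/-- `⋂_{(A,B) ∈ C} B`. -/
def interB {V : Type} (C : Set (Set V × Set V)) : Set V := ⋂ p ∈ C, p.2

/-- `H ∧_k C := H ∧_k (⋂_{(A,B) ∈ C} B)`. -/
def wedgeC {V : Type} (H : SimpleGraph V) (C : Set (Set V × Set V)) (k : ℕ) :
    SimpleGraph (↥(interB C) ⊕ (↥((interB C)ᶜ) × Fin k)) :=
  wedge H (interB C) k

/-- A class of graphs, given as a predicate on graphs over arbitrary vertex types. -/
abbrev GraphClass : Type 1 := ∀ (U : Type), SimpleGraph U → Prop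

/-- `H` is isomorphic to a subgraph of `G`. -/
def SubgraphOf {V W : Type} (H : SimpleGraph V) (G : SimpleGraph W) : Prop :=
  ∃ f : V → W, Function.Injective f ∧ ∀ ⦃u v⦄, H.Adj u v → G.Adj (f u) (f v)

/-- A class of (finite) graphs is monotone if it is closed under taking subgraphs. -/
def MonotoneClass (𝒢 : GraphClass) : Prop :=
  ∀ (V W : Type) [Fintype V] [Fintype W] (H : SimpleGraph V) (G : SimpleGraph W),
    SubgraphOf H G → 𝒢 W G → 𝒢 V H

/-- An independent collection `L` of separations of `H` is `𝒢`-duplicable if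
`H ∧_k L ∈ 𝒢` for infinitely many positive integers `k`. -/
def Duplicable (𝒢 : GraphClass) {V : Type} (H : SimpleGraph V)
    (L : Set (Set V × Set V)) : Prop :=
  {k : ℕ | 0 < k ∧ 𝒢 _ (wedgeC H L k)}.Infinite

/-- The central torso of `L`: `H` induced on `⋂_{(A,B)∈L} B`, with each `A ∩ B` completed to
a clique. -/
def centralTorso {V : Type} (H : SimpleGraph V) (L : Set (Set V × Set V)) :
    SimpleGraph (↥(interB L)) :=
  SimpleGraph.fromRel fun a b =>
    H.Adj a b ∨ ∃ p ∈ L, (a : V) ∈ p.1 ∩ p.2 ∧ (b : V) ∈ p.1 ∩ p.2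

/-- The peripheral torso for `(X,Y) ∈ L`: `H` induced on `X`, with `X ∩ Y` completed to a
clique. -/
def periTorso {V : Type} (H : SimpleGraph V) (X Y : Set V) : SimpleGraph (↥X) :=
  SimpleGraph.fromRel fun a b =>
    H.Adj a b ∨ ((a : V) ∈ X ∩ Y ∧ (b : V) ∈ X ∩ Y)

/-- `G` is a `(≤ k)`-sum of `G₁` and `G₂`. -/
def IsCliqueSumLE {Wt W₁ W₂ : Type} (k : ℕ) (G : SimpleGraph Wt)
    (G₁ : SimpleGraph W₁) (G₂ : SimpleGraph W₂) : Prop :=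
  ∃ A B : Set Wt, A ∪ B = Set.univ ∧ (A ∩ B).ncard ≤ k ∧
    (∀ a b, G.Adj a b → (a ∈ A ∧ b ∈ A) ∨ (a ∈ B ∧ b ∈ B)) ∧
    (∃ e₁ : W₁ ≃ ↥A, ∀ x y : W₁,
        G₁.Adj x y ↔ (G.Adj (e₁ x : Wt) (e₁ y : Wt) ∨
          (x ≠ y ∧ (e₁ x : Wt) ∈ A ∩ B ∧ (e₁ y : Wt) ∈ A ∩ B))) ∧
    (∃ e₂ : W₂ ≃ ↥B, ∀ x y : W₂,
        G₂.Adj x y ↔ (G.Adj (e₂ x : Wt) (e₂ y : Wt) ∨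
          (x ≠ y ∧ (e₂ x : Wt) ∈ A ∩ B ∧ (e₂ y : Wt) ∈ A ∩ B)))

section Aux
variable {V : Type} {H : SimpleGraph V} {L : Set (Set V × Set V)}

lemma interB_subset {p : Set V × Set V} (hp : p ∈ L) : interB L ⊆ p.2 := by
  intro v hv
  exact Set.mem_iInter₂.mp hv p hp

lemma block_unique (hL : IsIndepCollection H L) {p q : Set V × Set V} {v : V}
    (hp : p ∈ L) (hq : q ∈ L) (hvp : v ∈ p.1 \ p.2) (hvq : v ∈ q.1 \ q.2) : p = q := by
  by_contra h
  exact hvq.2 ((hL.2 p hp q hq h).1 hvp.1)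

lemma exists_block (hL : IsIndepCollection H L) {v : V} (hv : v ∈ (interB L)ᶜ) :
    ∃ p ∈ L, v ∈ p.1 \ p.2 := by
  simp only [interB, Set.mem_compl_iff, Set.mem_iInter] at hv
  push_neg at hv
  obtain ⟨p, hp, hv2⟩ := hv
  refine ⟨p, hp, ?_, hv2⟩
  have h1 := (hL.1 p hp).1.1
  have h2 : v ∈ p.1 ∪ p.2 := h1 ▸ Set.mem_univ v
  rcases h2 with h | h
  · exact h
  · exact absurd h hv2

lemma same_block (hL : IsIndepCollection H L) {v w : V}
    (hv : v ∈ (interB L)ᶜ) (hw : w ∈ (interB L)ᶜ) (hadj : H.Adj v w) :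
    ∃ p ∈ L, v ∈ p.1 \ p.2 ∧ w ∈ p.1 \ p.2 := by
  obtain ⟨p, hp, hvp⟩ := exists_block hL hv
  obtain ⟨q, hq, hwq⟩ := exists_block hL hw
  rcases eq_or_ne p q with rfl | hne
  · exact ⟨p, hp, hvp, hwq⟩
  · exfalso
    have hwp2 : w ∈ p.2 := (hL.2 q hq p hp hne.symm).1 hwq.1
    have hwp1 : w ∉ p.1 := fun h => hwq.2 ((hL.2 p hp q hq hne).1 h)
    exact (hL.1 p hp).1.2 v hvp w ⟨hwp2, hwp1⟩ hadj

lemma cross_block (hL : IsIndepCollection H L) {p : Set V × Set V} (hp : p ∈ L)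
    {z v : V} (hz : z ∈ interB L) (hv : v ∈ p.1 \ p.2) (hadj : H.Adj z v) :
    z ∈ p.1 ∩ p.2 := by
  have hz2 : z ∈ p.2 := interB_subset hp hz
  refine ⟨?_, hz2⟩
  by_contra h
  exact (hL.1 p hp).1.2 v hv z ⟨hz2, h⟩ hadj.symm

lemma mem_interB (hL : IsIndepCollection H L) {p : Set V × Set V} (hp : p ∈ L)
    {v : V} (hv : v ∈ p.1 ∩ p.2) : v ∈ interB L := by
  apply Set.mem_iInter₂.mpr
  intro q hq
  rcases eq_or_ne p q with rfl | hne
  · exact hv.2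
  · exact (hL.2 p hp q hq hne).1 hv.1

end Aux

def bigRel {V : Type} (H : SimpleGraph V) (L : Set (Set V × Set V)) (k : ℕ) :
    (↥(interB L) ⊕ (↥((interB L)ᶜ) × Fin k)) → (↥(interB L) ⊕ (↥((interB L)ᶜ) × Fin k)) → Prop
  | Sum.inl z, Sum.inl z' =>
      H.Adj z z' ∨ ∃ p ∈ L, (z : V) ∈ p.1 ∩ p.2 ∧ (z' : V) ∈ p.1 ∩ p.2
  | Sum.inl z, Sum.inr (v, _) => H.Adj z v
  | Sum.inr (v, _), Sum.inl z => H.Adj v z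
  | Sum.inr (v, i), Sum.inr (w, j) =>
      i = j ∧ ∃ p ∈ L, (v : V) ∈ p.1 \ p.2 ∧ (w : V) ∈ p.1 \ p.2 ∧ H.Adj v w

def bigF {V : Type} (H : SimpleGraph V) (L : Set (Set V × Set V)) (k : ℕ) :
    SimpleGraph (↥(interB L) ⊕ (↥((interB L)ᶜ) × Fin k)) :=
  SimpleGraph.fromRel (bigRel H L k)

def inD {V : Type} (L : Set (Set V × Set V)) (k : ℕ) (S : Finset ((Set V × Set V) × Fin k)) :
    (↥(interB L) ⊕ (↥((interB L)ᶜ) × Fin k)) → Prop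
  | Sum.inl _ => True
  | Sum.inr (v, i) => ∃ p, (p, i) ∈ S ∧ (v : V) ∈ p.1 \ p.2

def inBset {V : Type} (L : Set (Set V × Set V)) (k : ℕ) (p : Set V × Set V) (i : Fin k) :
    (↥(interB L) ⊕ (↥((interB L)ᶜ) × Fin k)) → Prop
  | Sum.inl z => (z : V) ∈ p.1 ∩ p.2
  | Sum.inr (v, j) => j = i ∧ (v : V) ∈ p.1 \ p.2

open scoped Classical

section Step

variable {V : Type} [Fintype V] {H : SimpleGraph V} {L : Set (Set V × Set V)} {k : ℕ}

lemma stepSum (t : ℕ) (hL : IsIndepCollection H L)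
    {S : Finset ((Set V × Set V) × Fin k)} {p : Set V × Set V} {i : Fin k}
    (hpL : p ∈ L) (hxS : (p, i) ∉ S) (hS : ∀ y ∈ S, y.1 ∈ L)
    (hord : (p.1 ∩ p.2).ncard ≤ t) :
    IsCliqueSumLE t ((bigF H L k).induce {ω | inD L k (insert (p, i) S) ω})
      ((bigF H L k).induce {ω | inD L k S ω}) (periTorso H p.1 p.2) := by
  classical
  have hDmono : ∀ ω, inD L k S ω → inD L k (insert (p, i) S) ω := by
    intro ω h
    cases ω with
    | inl z => trivial
    | inr vi =>
      obtain ⟨v, j⟩ := vi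
      obtain ⟨q, hq, hv⟩ := h
      exact ⟨q, Finset.mem_insert_of_mem hq, hv⟩
  have hAB : ∀ ω, inD L k S ω → inBset L k p i ω →
      ∃ z : ↥(interB L), ω = Sum.inl z ∧ (z : V) ∈ p.1 ∩ p.2 := by
    intro ω h1 h2
    cases ω with
    | inl z => exact ⟨z, rfl, h2⟩
    | inr vi =>
      obtain ⟨v, j⟩ := vi
      obtain ⟨q, hq, hv⟩ := h1
      obtain ⟨rfl, hv2⟩ := h2
      have hq' : q = p := block_unique hL (hS _ hq) hpL hv hv2
      exact absurd (hq' ▸ hq) hxS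
  refine ⟨{ω | inD L k S ω.1}, {ω | inBset L k p i ω.1}, ?_, ?_, ?_, ?_, ?_⟩
  · -- cover
    apply Set.eq_univ_of_forall
    rintro ⟨ω, hω⟩
    cases ω with
    | inl z => exact Or.inl trivial
    | inr vi =>
      obtain ⟨v, j⟩ := vi
      obtain ⟨q, hq, hv⟩ := hω
      rcases Finset.mem_insert.mp hq with heq | hqS
      · obtain ⟨rfl, rfl⟩ : q = p ∧ j = i :=
          ⟨congrArg Prod.fst heq, congrArg Prod.snd heq⟩
        exact Or.inr ⟨rfl, hv⟩
      · exact Or.inl ⟨q, hqS, hv⟩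
  · -- ncard
    refine le_trans (Set.ncard_le_ncard_of_injOn
      (fun ω => Sum.elim (fun z : ↥(interB L) => (z : V)) (fun vi : ↥((interB L)ᶜ) × Fin k => (vi.1 : V)) ω.1) ?_ ?_
      (Set.toFinite _)) hord
    · rintro ω ⟨h1, h2⟩
      obtain ⟨z, hz, hzm⟩ := hAB ω.1 h1 h2
      simp only [hz, Sum.elim_inl]
      exact hzm
    · rintro a ⟨ha1, ha2⟩ b ⟨hb1, hb2⟩ heq
      obtain ⟨za, hza, -⟩ := hAB a.1 ha1 ha2
      obtain ⟨zb, hzb, -⟩ := hAB b.1 hb1 hb2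
      simp only [hza, hzb, Sum.elim_inl] at heq
      apply Subtype.ext
      rw [hza, hzb]
      exact congrArg Sum.inl (Subtype.ext heq)
  · -- edges
    have key : ∀ ωa ωb, inD L k (insert (p, i) S) ωa → inD L k (insert (p, i) S) ωb →
        bigRel H L k ωa ωb →
        (inD L k S ωa ∧ inD L k S ωb) ∨ (inBset L k p i ωa ∧ inBset L k p i ωb) := by
      intro ωa ωb ha hb hrel
      cases ωa with
      | inl z =>
        cases ωb with
        | inl z' => exact Or.inl ⟨trivial, trivial⟩
        | inr vi =>
          obtain ⟨v, j⟩ := vi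
          obtain ⟨q, hq, hv⟩ := hb
          rcases Finset.mem_insert.mp hq with heq | hqS
          · obtain ⟨rfl, rfl⟩ : q = p ∧ j = i :=
              ⟨congrArg Prod.fst heq, congrArg Prod.snd heq⟩
            exact Or.inr ⟨cross_block hL hpL z.2 hv hrel, rfl, hv⟩
          · exact Or.inl ⟨trivial, ⟨q, hqS, hv⟩⟩
      | inr vi =>
        obtain ⟨v, j⟩ := vi
        cases ωb with
        | inl z =>
          obtain ⟨q, hq, hv⟩ := ha
          rcases Finset.mem_insert.mp hq with heq | hqS
          · obtain ⟨rfl, rfl⟩ : q = p ∧ j = i :=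
              ⟨congrArg Prod.fst heq, congrArg Prod.snd heq⟩
            exact Or.inr ⟨⟨rfl, hv⟩, cross_block hL hpL z.2 hv hrel.symm⟩
          · exact Or.inl ⟨⟨q, hqS, hv⟩, trivial⟩
        | inr wi =>
          obtain ⟨w, j'⟩ := wi
          obtain ⟨rfl, q', hq'L, hv', hw', hadj⟩ := hrel
          obtain ⟨q, hq, hv⟩ := ha
          have hqL : q ∈ L := by
            rcases Finset.mem_insert.mp hq with heq | hqS
            · have : q = p := congrArg Prod.fst heq
              exact this ▸ hpL
            · exact hS _ hqS
          have hqq : q = q' := block_unique hL hqL hq'L hv hv'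
          subst hqq
          rcases Finset.mem_insert.mp hq with heq | hqS
          · obtain ⟨rfl, rfl⟩ : q = p ∧ j = i :=
              ⟨congrArg Prod.fst heq, congrArg Prod.snd heq⟩
            exact Or.inr ⟨⟨rfl, hv'⟩, ⟨rfl, hw'⟩⟩
          · exact Or.inl ⟨⟨q, hqS, hv'⟩, ⟨q, hqS, hw'⟩⟩
    rintro ⟨ωa, ha⟩ ⟨ωb, hb⟩ hab
    have hab' : (bigF H L k).Adj ωa ωb := hab
    rw [bigF, SimpleGraph.fromRel_adj] at hab'
    rcases hab'.2 with hr | hr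
    · exact key ωa ωb ha hb hr
    · rcases key ωb ωa hb ha hr with ⟨h1, h2⟩ | ⟨h1, h2⟩
      · exact Or.inl ⟨h2, h1⟩
      · exact Or.inr ⟨h2, h1⟩
  · -- e₁
    refine ⟨⟨fun ω => ⟨⟨ω.1, hDmono ω.1 ω.2⟩, ω.2⟩, fun ω => ⟨ω.1.1, ω.2⟩,
      fun ω => rfl, fun ω => rfl⟩, ?_⟩
    intro a b
    constructor
    · intro h
      exact Or.inl h
    · rintro (h | ⟨hne, hA, hB⟩)
      · exact h
      · obtain ⟨za, hza, hma⟩ := hAB a.1 hA.1 hA.2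
        obtain ⟨zb, hzb, hmb⟩ := hAB b.1 hB.1 hB.2
        show (bigF H L k).Adj a.1 b.1
        rw [bigF, SimpleGraph.fromRel_adj, hza, hzb]
        refine ⟨?_, Or.inl (Or.inr ⟨p, hpL, hma, hmb⟩)⟩
        intro hcon
        exact hne (Subtype.ext (by rw [hza, hzb, hcon]))
  · -- e₂
    have hZc : ∀ v : V, v ∉ p.2 → v ∈ (interB L)ᶜ := fun v h hm => h (interB_subset hpL hm)
    have hnotA : ∀ (v : ↥((interB L)ᶜ)), (v : V) ∈ p.1 \ p.2 →
        ¬ inD L k S (Sum.inr (v, i)) := by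
      rintro v hv ⟨q, hq, hv'⟩
      have hq' : q = p := block_unique hL (hS _ hq) hpL hv' hv
      exact hxS (hq' ▸ hq)
    have hGadj : ∀ u v : {ω // inD L k (insert (p, i) S) ω},
        ((bigF H L k).induce {ω | inD L k (insert (p, i) S) ω}).Adj u v ↔
          (u.1 ≠ v.1 ∧ (bigRel H L k u.1 v.1 ∨ bigRel H L k v.1 u.1)) := by
      intro u v
      exact SimpleGraph.fromRel_adj _ _ _
    have hPadj : ∀ x y : ↥p.1, (periTorso H p.1 p.2).Adj x y ↔
        ((x : V) ≠ (y : V) ∧ (H.Adj x y ∨ ((x : V) ∈ p.1 ∩ p.2 ∧ (y : V) ∈ p.1 ∩ p.2))) := by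
      intro x y
      rw [periTorso, SimpleGraph.fromRel_adj]
      constructor
      · rintro ⟨hne, hr⟩
        refine ⟨fun hcon => hne (Subtype.ext hcon), ?_⟩
        rcases hr with (h | h) | (h | h)
        · exact Or.inl h
        · exact Or.inr h
        · exact Or.inl h.symm
        · exact Or.inr ⟨h.2, h.1⟩
      · rintro ⟨hne, hr⟩
        exact ⟨fun hcon => hne (congrArg Subtype.val hcon), Or.inl hr⟩
    set f₂ : ↥p.1 → ↥{ω : {ω // inD L k (insert (p, i) S) ω} | inBset L k p i ω.1} :=
      fun x => if h : (x : V) ∈ p.2 then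
          ⟨⟨Sum.inl ⟨x, mem_interB hL hpL ⟨x.2, h⟩⟩, trivial⟩, ⟨x.2, h⟩⟩
        else
          ⟨⟨Sum.inr (⟨x, hZc x h⟩, i), ⟨p, Finset.mem_insert_self _ _, x.2, h⟩⟩,
            rfl, x.2, h⟩ with hf₂
    refine ⟨⟨f₂, fun ω => match ω with
      | ⟨⟨Sum.inl z, _⟩, hB⟩ => ⟨z, hB.1⟩
      | ⟨⟨Sum.inr (v, _), _⟩, hB⟩ => ⟨v, hB.2.1⟩, ?_, ?_⟩, ?_⟩
    · -- left inverse
      intro x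
      by_cases hx : (x : V) ∈ p.2
      · simp only [hf₂]
        rw [dif_pos hx]
      · simp only [hf₂]
        rw [dif_neg hx]
    · -- right inverse
      rintro ⟨⟨ω0, hT⟩, hB⟩
      cases ω0 with
      | inl z =>
        have hz : (z : V) ∈ p.1 ∩ p.2 := hB
        show f₂ ⟨(z : V), hz.1⟩ = _
        simp only [hf₂]
        rw [dif_pos hz.2]
      | inr vi =>
        obtain ⟨v, j⟩ := vi
        have hj : j = i := hB.1
        have hv : (v : V) ∈ p.1 \ p.2 := hB.2
        subst hj
        show f₂ ⟨(v : V), hv.1⟩ = _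
        simp only [hf₂]
        rw [dif_neg hv.2]
    · -- adjacency iff
      intro x y
      simp only [Equiv.coe_fn_mk, hf₂]
      by_cases hx : (x : V) ∈ p.2 <;> by_cases hy : (y : V) ∈ p.2
      · rw [dif_pos hx, dif_pos hy, hPadj]
        constructor
        · rintro ⟨hne, -⟩
          exact Or.inr ⟨fun hcon => hne (congrArg Subtype.val hcon),
            ⟨trivial, x.2, hx⟩, ⟨trivial, y.2, hy⟩⟩
        · rintro (hadj | ⟨hne, -, -⟩)
          · rw [hGadj] at hadj
            have hne : (x : V) ≠ (y : V) := by
              intro hcon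
              exact hadj.1 (congrArg Sum.inl (Subtype.ext hcon))
            exact ⟨hne, Or.inr ⟨⟨x.2, hx⟩, ⟨y.2, hy⟩⟩⟩
          · exact ⟨fun hcon => hne (Subtype.ext hcon),
              Or.inr ⟨⟨x.2, hx⟩, ⟨y.2, hy⟩⟩⟩
      · rw [dif_pos hx, dif_neg hy, hPadj]
        constructor
        · rintro ⟨hne, hrel⟩
          have hadj : H.Adj (x : V) (y : V) := by
            rcases hrel with h | ⟨-, hy2⟩
            · exact h
            · exact absurd hy2.2 hy
          left
          rw [hGadj]
          exact ⟨fun hcon => Sum.inl_ne_inr hcon, Or.inl hadj⟩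
        · rintro (hadj | ⟨-, -, hmy⟩)
          · rw [hGadj] at hadj
            have hadj' : H.Adj (x : V) (y : V) := by
              rcases hadj.2 with h | h
              · exact h
              · exact h.symm
            exact ⟨hadj'.ne, Or.inl hadj'⟩
          · exact absurd hmy.1 (hnotA _ ⟨y.2, hy⟩)
      · rw [dif_neg hx, dif_pos hy, hPadj]
        constructor
        · rintro ⟨hne, hrel⟩
          have hadj : H.Adj (x : V) (y : V) := by
            rcases hrel with h | ⟨hx2, -⟩
            · exact h
            · exact absurd hx2.2 hx
          left
          rw [hGadj]
          exact ⟨fun hcon => Sum.inr_ne_inl hcon, Or.inl hadj⟩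
        · rintro (hadj | ⟨-, hmx, -⟩)
          · rw [hGadj] at hadj
            have hadj' : H.Adj (x : V) (y : V) := by
              rcases hadj.2 with h | h
              · exact h
              · exact h.symm
            exact ⟨hadj'.ne, Or.inl hadj'⟩
          · exact absurd hmx.1 (hnotA _ ⟨x.2, hx⟩)
      · rw [dif_neg hx, dif_neg hy, hPadj]
        constructor
        · rintro ⟨hne, hrel⟩
          have hadj : H.Adj (x : V) (y : V) := by
            rcases hrel with h | ⟨hx2, -⟩
            · exact h
            · exact absurd hx2.2 hx
          left
          rw [hGadj]
          refine ⟨?_, Or.inl ⟨rfl, p, hpL, ⟨x.2, hx⟩, ⟨y.2, hy⟩, hadj⟩⟩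
          intro hcon
          apply hne
          have h2 := Sum.inr.inj hcon
          exact congrArg (fun q => (q.1 : V)) h2
        · rintro (hadj | ⟨-, hmx, -⟩)
          · rw [hGadj] at hadj
            have hadj' : H.Adj (x : V) (y : V) := by
              rcases hadj.2 with ⟨-, q, -, -, -, h⟩ | ⟨-, q, -, -, -, h⟩
              · exact h
              · exact h.symm
            exact ⟨hadj'.ne, Or.inl hadj'⟩
          · exact absurd hmx.1 (hnotA _ ⟨x.2, hx⟩)

end Step


lemma induce_mem {V : Type} [Fintype V] {H : SimpleGraph V} {L : Set (Set V × Set V)} {k : ℕ}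
    (𝒢 : GraphClass) (h𝒢 : MonotoneClass 𝒢) (t : ℕ)
    (hsum : ∀ (Wt W₁ W₂ : Type) [Fintype Wt] [Fintype W₁] [Fintype W₂]
        (G : SimpleGraph Wt) (G₁ : SimpleGraph W₁) (G₂ : SimpleGraph W₂),
        𝒢 W₁ G₁ → 𝒢 W₂ G₂ → IsCliqueSumLE t G G₁ G₂ → 𝒢 Wt G)
    (hL : IsIndepCollection H L)
    (hord : ∀ p ∈ L, (p.1 ∩ p.2).ncard ≤ t)
    (hcentral : 𝒢 _ (centralTorso H L))
    (hperi : ∀ p ∈ L, 𝒢 _ (periTorso H p.1 p.2))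
    (S : Finset ((Set V × Set V) × Fin k)) (hS : ∀ x ∈ S, x.1 ∈ L) :
    𝒢 _ ((bigF H L k).induce {ω | inD L k S ω}) := by
  classical
  revert hS
  induction S using Finset.induction_on with
  | empty =>
    intro _
    have hempty : ∀ (v : ↥((interB L)ᶜ)) (j : Fin k),
        ¬ inD L k (∅ : Finset ((Set V × Set V) × Fin k)) (Sum.inr (v, j)) := by
      rintro v j ⟨q, hq, -⟩
      exact absurd hq (Finset.notMem_empty _)
    haveI : Fintype ↥(interB L) := Fintype.ofFinite _
    haveI : Fintype ↥{ω : ↥(interB L) ⊕ (↥((interB L)ᶜ) × Fin k) |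
        inD L k (∅ : Finset ((Set V × Set V) × Fin k)) ω} := Fintype.ofFinite _
    set f : ↥{ω : ↥(interB L) ⊕ (↥((interB L)ᶜ) × Fin k) |
        inD L k (∅ : Finset ((Set V × Set V) × Fin k)) ω} → ↥(interB L) :=
      fun ω => match ω with
        | ⟨Sum.inl z, _⟩ => z
        | ⟨Sum.inr (v, j), h⟩ => absurd h (hempty v j)
      with hf
    refine h𝒢 _ _ _ _ ⟨f, ?_, ?_⟩ hcentral
    · rintro ⟨ω1, h1⟩ ⟨ω2, h2⟩ heq
      cases ω1 with
      | inl z1 =>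
        cases ω2 with
        | inl z2 =>
          rw [hf] at heq
          dsimp only at heq
          apply Subtype.ext
          exact congrArg Sum.inl heq
        | inr vi =>
          obtain ⟨v, j⟩ := vi
          exact absurd h2 (hempty v j)
      | inr vi =>
        obtain ⟨v, j⟩ := vi
        exact absurd h1 (hempty v j)
    · rintro ⟨ω1, h1⟩ ⟨ω2, h2⟩ hadj
      cases ω1 with
      | inl z1 =>
        cases ω2 with
        | inl z2 =>
          have hadj' : (bigF H L k).Adj (Sum.inl z1) (Sum.inl z2) := hadj
          rw [bigF, SimpleGraph.fromRel_adj] at hadj'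
          show (centralTorso H L).Adj (f ⟨Sum.inl z1, h1⟩) (f ⟨Sum.inl z2, h2⟩)
          rw [hf]
          dsimp only
          rw [centralTorso, SimpleGraph.fromRel_adj]
          exact ⟨fun hcon => hadj'.1 (congrArg Sum.inl hcon), hadj'.2⟩
        | inr vi =>
          obtain ⟨v, j⟩ := vi
          exact absurd h2 (hempty v j)
      | inr vi =>
        obtain ⟨v, j⟩ := vi
        exact absurd h1 (hempty v j)
  | @insert x S hxS ih =>
    intro hS'
    have hS'' : ∀ y ∈ S, y.1 ∈ L := fun y hy => hS' y (Finset.mem_insert_of_mem hy)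
    have hpL : x.1 ∈ L := hS' x (Finset.mem_insert_self x S)
    obtain ⟨p, i⟩ := x
    haveI : Fintype ↥{ω : ↥(interB L) ⊕ (↥((interB L)ᶜ) × Fin k) |
        inD L k (insert (p, i) S) ω} := Fintype.ofFinite _
    haveI : Fintype ↥{ω : ↥(interB L) ⊕ (↥((interB L)ᶜ) × Fin k) |
        inD L k S ω} := Fintype.ofFinite _
    haveI : Fintype ↥p.1 := Fintype.ofFinite _
    exact hsum _ _ _ _ _ _ (ih hS'') (hperi p hpL)
      (stepSum t hL hpL hxS hS'' (hord p hpL))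

lemma bigF_mem {V : Type} [Fintype V] {H : SimpleGraph V} {L : Set (Set V × Set V)} {k : ℕ}
    (𝒢 : GraphClass) (h𝒢 : MonotoneClass 𝒢) (t : ℕ)
    (hsum : ∀ (Wt W₁ W₂ : Type) [Fintype Wt] [Fintype W₁] [Fintype W₂]
        (G : SimpleGraph Wt) (G₁ : SimpleGraph W₁) (G₂ : SimpleGraph W₂),
        𝒢 W₁ G₁ → 𝒢 W₂ G₂ → IsCliqueSumLE t G G₁ G₂ → 𝒢 Wt G)
    (hL : IsIndepCollection H L)
    (hord : ∀ p ∈ L, (p.1 ∩ p.2).ncard ≤ t)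
    (hcentral : 𝒢 _ (centralTorso H L))
    (hperi : ∀ p ∈ L, 𝒢 _ (periTorso H p.1 p.2)) :
    𝒢 _ (bigF H L k) := by
  classical
  have hLfin : L.Finite := Set.toFinite L
  set S := hLfin.toFinset ×ˢ (Finset.univ : Finset (Fin k)) with hSdef
  have hS : ∀ x ∈ S, x.1 ∈ L := by
    intro x hx
    exact hLfin.mem_toFinset.mp (Finset.mem_product.mp hx).1
  have hmem := induce_mem 𝒢 h𝒢 t hsum hL hord hcentral hperi S hS
  have hall : ∀ ω : ↥(interB L) ⊕ (↥((interB L)ᶜ) × Fin k), inD L k S ω := by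
    intro ω
    cases ω with
    | inl z => trivial
    | inr vi =>
      obtain ⟨v, j⟩ := vi
      obtain ⟨p, hp, hv⟩ := exists_block hL v.2
      exact ⟨p, Finset.mem_product.mpr ⟨hLfin.mem_toFinset.mpr hp, Finset.mem_univ j⟩, hv⟩
  haveI : Fintype (↥(interB L) ⊕ (↥((interB L)ᶜ) × Fin k)) := Fintype.ofFinite _
  haveI : Fintype ↥{ω : ↥(interB L) ⊕ (↥((interB L)ᶜ) × Fin k) |
      inD L k S ω} := Fintype.ofFinite _
  exact h𝒢 _ _ _ _ ⟨fun ω => ⟨ω, hall ω⟩,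
    fun a b hab => congrArg Subtype.val hab, fun a b hab => hab⟩ hmem

lemma wedge_le_bigF {V : Type} {H : SimpleGraph V} {L : Set (Set V × Set V)} {k : ℕ}
    (hL : IsIndepCollection H L) : SubgraphOf (wedgeC H L k) (bigF H L k) := by
  refine ⟨id, fun a b h => h, ?_⟩
  intro a b hab
  rw [wedgeC, wedge, SimpleGraph.fromRel_adj] at hab
  rw [bigF, SimpleGraph.fromRel_adj]
  obtain ⟨hne, hr⟩ := hab
  refine ⟨hne, ?_⟩
  have conv : ∀ u v, wedgeRel H (interB L) k u v → bigRel H L k u v := by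
    intro u v huv
    cases u with
    | inl z =>
      cases v with
      | inl z' => exact Or.inl huv
      | inr wi =>
        obtain ⟨w, j⟩ := wi
        exact huv
    | inr vi =>
      obtain ⟨w, j⟩ := vi
      cases v with
      | inl z => exact huv
      | inr wi =>
        obtain ⟨w', j'⟩ := wi
        obtain ⟨hj, hadj⟩ := huv
        obtain ⟨q, hq, hv, hw⟩ := same_block hL w.2 w'.2 hadj
        exact ⟨hj, q, hq, hv, hw, hadj⟩
  rcases hr with h | h
  · exact Or.inl (conv _ _ h)
  · exact Or.inr (conv _ _ h)

/-- Let `𝒢` be a monotone class of graphs closed under `(≤ t)`-sums, `H` a graph, and `L` an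
independent collection of separations of `H` each of order at most `t`.  If every torso of
`L` belongs to `𝒢`, then `L` is `𝒢`-duplicable. -/
theorem stmt12 (𝒢 : GraphClass) (h𝒢 : MonotoneClass 𝒢) (t : ℕ)
    (hsum : ∀ (Wt W₁ W₂ : Type) [Fintype Wt] [Fintype W₁] [Fintype W₂]
        (G : SimpleGraph Wt) (G₁ : SimpleGraph W₁) (G₂ : SimpleGraph W₂),
        𝒢 W₁ G₁ → 𝒢 W₂ G₂ → IsCliqueSumLE t G G₁ G₂ → 𝒢 Wt G)
    {V : Type} [Fintype V] (H : SimpleGraph V)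
    (L : Set (Set V × Set V)) (hL : IsIndepCollection H L)
    (hord : ∀ p ∈ L, (p.1 ∩ p.2).ncard ≤ t)
    (hcentral : 𝒢 _ (centralTorso H L))
    (hperi : ∀ p ∈ L, 𝒢 _ (periTorso H p.1 p.2)) :
    Duplicable 𝒢 H L := by
  classical
  have main : ∀ k : ℕ, 𝒢 _ (wedgeC H L k) := by
    intro k
    haveI : Fintype (↥(interB L) ⊕ (↥((interB L)ᶜ) × Fin k)) := Fintype.ofFinite _
    exact h𝒢 _ _ _ _ (wedge_le_bigF hL)
      (bigF_mem 𝒢 h𝒢 t hsum hL hord hcentral hperi)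
  have hsub : Set.Ioi 0 ⊆ {k : ℕ | 0 < k ∧ 𝒢 _ (wedgeC H L k)} :=
    fun k hk => ⟨hk, main k⟩
  exact (Set.Ioi_infinite 0).mono hsub
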